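/- Let m ≥ 2, let U ⊆ ℂ^m be a connected open neighborhood of 0, and let X : U → ℂ^m be a holomorphic vector field such that [X, E] = 0 on U and L_X(∘)(Y,Z) = 0 on U for all differentiable vector fields Y, Z on U. Then there exist unique constants c_1, …, c_{m−1} ∈ ℂ such that X = Σ_{k=1}^{m−1} c_k · Y_k on U. In other words, the vector fields Y_1, …, Y_{m−1} form a basis of the Lie algebra of infinitesimal symmetries of the standard model (ℂ^m, ∘, e, E) near 0. -/

import Mathlib

open scoped BigOperators Topology

noncomputable section

/-- The truncated-polynomial multiplication on `ℂ^m ≅ ℂ[X]/(X^m)`: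
`(u ∘ v)_k = Σ_{i+j=k} u_i v_j`. -/
def tmul {m : ℕ} (u v : Fin m → ℂ) : Fin m → ℂ :=
  fun k => ∑ i : Fin m, ∑ j : Fin m,
    if (i : ℕ) + (j : ℕ) = (k : ℕ) then u i * v j else 0

/-- The `i`-th standard basis vector of `ℂ^m` (zero if `i ≥ m`); `std 0` is the unit `e`. -/
def std {m : ℕ} (i : ℕ) : Fin m → ℂ := fun j => if (j : ℕ) = i then 1 else 0

/-- Lie bracket of vector fields on `ℂ^m`: `[X,Y](p) = DY(p)(X(p)) − DX(p)(Y(p))`. -/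
def bracket {m : ℕ} (X Y : (Fin m → ℂ) → Fin m → ℂ) : (Fin m → ℂ) → Fin m → ℂ :=
  fun p => fderiv ℂ Y p (X p) - fderiv ℂ X p (Y p)

/-- Pointwise truncated product of vector fields. -/
def pmul {m : ℕ} (X Y : (Fin m → ℂ) → Fin m → ℂ) : (Fin m → ℂ) → Fin m → ℂ :=
  fun p => tmul (X p) (Y p)

/-- Lie derivative of the multiplication `∘` along `X`:
`L_X(∘)(Y,Z) = [X, Y∘Z] − [X,Y]∘Z − Y∘[X,Z]`. -/
def lieD {m : ℕ} (X Y Z : (Fin m → ℂ) → Fin m → ℂ) : (Fin m → ℂ) → Fin m → ℂ :=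
  fun p => bracket X (pmul Y Z) p - tmul (bracket X Y p) (Z p) - tmul (Y p) (bracket X Z p)

/-- The Euler field `E(t) = (t_0 + a, t_1 + 1, t_2, …, t_{m−1})`. -/
def Efield {m : ℕ} (a : ℂ) : (Fin m → ℂ) → Fin m → ℂ :=
  fun p => p + a • std 0 + std 1

/-- The vector field `Y_1(t) = (0, t_1+1, 2t_2, 3t_3, …, (m−1)t_{m−1})`. -/
def Yone {m : ℕ} : (Fin m → ℂ) → Fin m → ℂ :=
  fun p j => if (j : ℕ) = 1 then p j + 1 else ((j : ℕ) : ℂ) * p j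

/-- The infinitesimal symmetries `Y_1` and `Y_k := δ_{k−1} ∘ Y_1` for `k ≥ 2`. -/
def Ysym {m : ℕ} : ℕ → (Fin m → ℂ) → Fin m → ℂ
  | 1 => Yone
  | k => fun p => tmul (std (k - 1)) (Yone p)

namespace Stmt7aux

variable {m : ℕ}

/-- extension of a vector to a ℕ-indexed sequence -/
def nc (u : Fin m → ℂ) : ℕ → ℂ := fun n => if h : n < m then u ⟨n, h⟩ else 0

lemma nc_apply (u : Fin m → ℂ) (k : Fin m) : nc u (k : ℕ) = u k := by
  simp [nc, k.isLt]

/-- associated power series -/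
def ps (u : Fin m → ℂ) : PowerSeries ℂ := PowerSeries.mk (nc u)

lemma coeff_ps (u : Fin m → ℂ) (n : ℕ) : PowerSeries.coeff n (ps u) = nc u n :=
  PowerSeries.coeff_mk _ _

/-- truncation of a power series -/
def tr (A : PowerSeries ℂ) : Fin m → ℂ := fun k => PowerSeries.coeff (k : ℕ) A

lemma tr_ps (u : Fin m → ℂ) : (tr (ps u) : Fin m → ℂ) = u := by
  funext k; simp [tr, coeff_ps, nc_apply]

lemma tmul_apply (u v : Fin m → ℂ) (k : Fin m) :
    tmul u v k = ∑ i ∈ Finset.range ((k : ℕ) + 1), nc u i * nc v ((k : ℕ) - i) := by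
  have inner : ∀ i : Fin m,
      (∑ j : Fin m, if (i : ℕ) + (j : ℕ) = (k : ℕ) then u i * v j else 0)
      = if (i : ℕ) ≤ (k : ℕ) then nc u (i : ℕ) * nc v ((k : ℕ) - (i : ℕ)) else 0 := by
    intro i
    by_cases hik : (i : ℕ) ≤ (k : ℕ)
    · rw [if_pos hik]
      have hlt : (k : ℕ) - (i : ℕ) < m := lt_of_le_of_lt (Nat.sub_le _ _) k.isLt
      rw [Finset.sum_eq_single (⟨(k : ℕ) - (i : ℕ), hlt⟩ : Fin m)]
      · simp only [nc, dif_pos i.isLt, dif_pos hlt]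
        rw [if_pos (by omega)]
      · intro j _ hj
        rw [if_neg]
        intro hc
        exact hj (Fin.ext (by simp only [Fin.val_mk]; omega))
      · intro hc; exact absurd (Finset.mem_univ _) hc
    · rw [if_neg hik]
      apply Finset.sum_eq_zero
      intro j _
      rw [if_neg (by omega)]
  rw [tmul]
  simp only [inner]
  rw [Fin.sum_univ_eq_sum_range
    (fun i => if i ≤ (k : ℕ) then nc u i * nc v ((k : ℕ) - i) else 0) m]
  rw [← Finset.sum_subset (Finset.range_subset_range.2 k.isLt)]
  · apply Finset.sum_congr rfl
    intro i hi
    rw [if_pos (by simpa using Nat.lt_succ_iff.mp (Finset.mem_range.mp hi))]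
  · intro i _ hi
    rw [if_neg (by simp at hi ⊢; omega)]

lemma tmul_eq_tr (u v : Fin m → ℂ) : tmul u v = tr (ps u * ps v) := by
  funext k
  rw [tmul_apply, tr, PowerSeries.coeff_mul, Finset.Nat.sum_antidiagonal_eq_sum_range_succ_mk]
  simp [coeff_ps]


lemma coeff_mul_ps_tr (A B : PowerSeries ℂ) (k : Fin m) :
    PowerSeries.coeff (k : ℕ) (ps (tr A : Fin m → ℂ) * B)
      = PowerSeries.coeff (k : ℕ) (A * B) := by
  rw [PowerSeries.coeff_mul, PowerSeries.coeff_mul]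
  apply Finset.sum_congr rfl
  intro x hx
  rw [Finset.HasAntidiagonal.mem_antidiagonal] at hx
  have hx1 : x.1 < m := by have := k.isLt; omega
  rw [coeff_ps]
  simp [nc, hx1, tr]

lemma tmul_comm (u v : Fin m → ℂ) : tmul u v = tmul v u := by
  rw [tmul_eq_tr, tmul_eq_tr, mul_comm]

lemma tmul_assoc (u v w : Fin m → ℂ) : tmul (tmul u v) w = tmul u (tmul v w) := by
  rw [tmul_eq_tr u v, tmul_eq_tr v w, tmul_eq_tr, tmul_eq_tr]
  funext k
  show PowerSeries.coeff (k:ℕ) _ = PowerSeries.coeff (k:ℕ) _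
  rw [coeff_mul_ps_tr]
  conv_rhs => rw [mul_comm (ps u), coeff_mul_ps_tr]
  rw [mul_comm (ps v * ps w), mul_assoc]

lemma tmul_add_left (u u' v : Fin m → ℂ) : tmul (u + u') v = tmul u v + tmul u' v := by
  funext k
  simp only [tmul, Pi.add_apply, ← Finset.sum_add_distrib]
  refine Finset.sum_congr rfl fun i _ => Finset.sum_congr rfl fun j _ => by split <;> ring

lemma tmul_smul_left (c : ℂ) (u v : Fin m → ℂ) : tmul (c • u) v = c • tmul u v := by
  funext k
  simp only [tmul, Pi.smul_apply, smul_eq_mul, Finset.mul_sum]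
  refine Finset.sum_congr rfl fun i _ => Finset.sum_congr rfl fun j _ => by split <;> ring

lemma tmul_add_right (u v v' : Fin m → ℂ) : tmul u (v + v') = tmul u v + tmul u v' := by
  rw [tmul_comm, tmul_add_left, tmul_comm v u, tmul_comm v' u]

lemma tmul_smul_right (c : ℂ) (u v : Fin m → ℂ) : tmul u (c • v) = c • tmul u v := by
  rw [tmul_comm, tmul_smul_left, tmul_comm]

lemma tmul_zero_left (v : Fin m → ℂ) : tmul 0 v = 0 := by
  have := tmul_smul_left (0 : ℂ) 0 v
  simpa using this

lemma tmul_zero_right (v : Fin m → ℂ) : tmul v 0 = 0 := by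
  rw [tmul_comm]; exact tmul_zero_left v

lemma tmul_neg_left (u v : Fin m → ℂ) : tmul (-u) v = - tmul u v := by
  have := tmul_smul_left (-1 : ℂ) u v
  simpa using this

lemma tmul_sub_left (u u' v : Fin m → ℂ) : tmul (u - u') v = tmul u v - tmul u' v := by
  rw [sub_eq_add_neg, tmul_add_left, tmul_neg_left, sub_eq_add_neg]

/-- std as power series -/
lemma ps_std (i : ℕ) (hi : i < m) : ps (std i : Fin m → ℂ) = (PowerSeries.X : PowerSeries ℂ) ^ i := by
  apply PowerSeries.ext
  intro n
  rw [coeff_ps, PowerSeries.coeff_X_pow]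
  simp only [nc, std]
  split
  · simp only [Fin.val_mk]
  · rw [if_neg (by omega)]

lemma std_eq_zero (i : ℕ) (hi : m ≤ i) : (std i : Fin m → ℂ) = 0 := by
  funext j; simp only [std, Pi.zero_apply]
  rw [if_neg (by have := j.isLt; omega)]

lemma tmul_std_std (i j : ℕ) : tmul (std i : Fin m → ℂ) (std j) = std (i + j) := by
  by_cases hi : i < m
  · by_cases hj : j < m
    · rw [tmul_eq_tr, ps_std i hi, ps_std j hj, ← pow_add]
      funext k
      show PowerSeries.coeff (k : ℕ) _ = _
      rw [PowerSeries.coeff_X_pow]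
      simp [std, eq_comm]
    · rw [std_eq_zero j (by omega), tmul_zero_right, std_eq_zero (i+j) (by omega)]
  · rw [std_eq_zero i (by omega), tmul_zero_left, std_eq_zero (i+j) (by omega)]

lemma tmul_one (v : Fin m → ℂ) (hm : 0 < m) : tmul (std 0) v = v := by
  rw [tmul_eq_tr, ps_std 0 hm, pow_zero, one_mul, tr_ps]

lemma tmul_one' (v : Fin m → ℂ) (hm : 0 < m) : tmul v (std 0) = v := by
  rw [tmul_comm]; exact tmul_one v hm

/-- the workhorse for computing products with basis vectors -/
lemma tmul_std_right (w : Fin m → ℂ) (i : ℕ) (hi : i < m) (k : Fin m) :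
    tmul w (std i) k = if i ≤ (k : ℕ) then nc w ((k : ℕ) - i) else 0 := by
  rw [tmul_eq_tr, ps_std i hi]
  show PowerSeries.coeff (k : ℕ) _ = _
  rw [PowerSeries.coeff_mul_X_pow']
  split <;> simp [coeff_ps]

lemma cancel {v : Fin m → ℂ} (h0 : nc v 0 ≠ 0) {x : Fin m → ℂ} (hx : tmul x v = 0) :
    x = 0 := by
  funext k
  have key : ∀ n : ℕ, ∀ k : Fin m, (k : ℕ) = n → x k = 0 := by
    intro n
    induction n using Nat.strong_induction_on with
    | _ n ih =>
      intro k hk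
      have h := congrFun hx k
      rw [tmul_apply] at h
      rw [Finset.sum_eq_single ((k : ℕ))] at h
      · have : nc x (k : ℕ) = x k := nc_apply x k
        simp only [Nat.sub_self] at h
        rcases mul_eq_zero.mp h with h' | h'
        · rw [← this]; exact h'
        · exact absurd h' h0
      · intro i hi hne
        have hik : i < (k : ℕ) := by
          have := Finset.mem_range.mp hi; omega
        have : nc x i = 0 := by
          have hilt : i < m := lt_trans hik k.isLt
          have := ih i (by omega) ⟨i, hilt⟩ rfl
          simp [nc, hilt, this]
        rw [this, zero_mul]
      · intro hc; simp at hc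
  exact key (k : ℕ) k rfl

lemma cancel' {v : Fin m → ℂ} (h0 : nc v 0 ≠ 0) {x y : Fin m → ℂ}
    (hxy : tmul x v = tmul y v) : x = y := by
  have : tmul (x - y) v = 0 := by rw [tmul_sub_left, hxy, sub_self]
  have := cancel h0 this
  exact sub_eq_zero.mp this

lemma expand (v : Fin m → ℂ) : v = ∑ i : Fin m, v i • (std (i : ℕ) : Fin m → ℂ) := by
  funext k
  rw [Finset.sum_apply]
  rw [Finset.sum_eq_single k]
  · simp [std]
  · intro i _ hne
    simp only [Pi.smul_apply, std, smul_eq_mul]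
    rw [if_neg (fun hc => hne (Fin.ext hc).symm), mul_zero]
  · intro hc; simp at hc


/-- formal derivative -/
def der {m : ℕ} (v : Fin m → ℂ) : Fin m → ℂ := fun j =>
  if h : (j : ℕ) + 1 < m then (((j : ℕ) + 1 : ℕ) : ℂ) * v ⟨(j : ℕ) + 1, h⟩ else 0

lemma der_add (u v : Fin m → ℂ) : der (u + v) = der u + der v := by
  funext j; simp only [der, Pi.add_apply]; split <;> ring

lemma der_smul (c : ℂ) (v : Fin m → ℂ) : der (c • v) = c • der v := by
  funext j; simp only [der, Pi.smul_apply, smul_eq_mul]; split <;> ring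

lemma der_zero : der (0 : Fin m → ℂ) = 0 := by
  funext j; simp only [der, Pi.zero_apply]; split <;> ring

/-- der as a linear map -/
def derLin : (Fin m → ℂ) →ₗ[ℂ] (Fin m → ℂ) where
  toFun := der
  map_add' := der_add
  map_smul' := der_smul

lemma der_sum (v : Fin m → ℂ) :
    der v = ∑ i : Fin m, (((i : ℕ) : ℂ) * v i) • (std ((i : ℕ) - 1) : Fin m → ℂ) := by
  funext j
  rw [Finset.sum_apply]
  by_cases h : (j : ℕ) + 1 < m
  · rw [Finset.sum_eq_single (⟨(j : ℕ) + 1, h⟩ : Fin m)]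
    · simp only [der, dif_pos h, std, Fin.val_mk, Nat.add_sub_cancel, if_pos rfl,
        Pi.smul_apply, smul_eq_mul]
      push_cast; ring
    · intro i _ hne
      simp only [Pi.smul_apply, std, smul_eq_mul]
      rcases Nat.eq_zero_or_pos (i : ℕ) with h0 | h0
      · rw [h0]; simp
      · rw [if_neg, mul_zero]
        intro hc
        exact hne (Fin.ext (by simp only [Fin.val_mk]; omega))
    · intro hc; simp at hc
  · simp only [der, dif_neg h]
    symm
    apply Finset.sum_eq_zero
    intro i _
    simp only [Pi.smul_apply, std, smul_eq_mul]
    rcases Nat.eq_zero_or_pos (i : ℕ) with h0 | h0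
    · rw [h0]; simp
    · rw [if_neg, mul_zero]
      intro hc
      have := i.isLt
      omega

/-- a linear derivation is given by multiplication against the derivative -/
lemma derivation_std (D : (Fin m → ℂ) →L[ℂ] (Fin m → ℂ))
    (hD : ∀ v w, D (tmul v w) = tmul (D v) w + tmul v (D w)) :
    ∀ i : ℕ, D (std i) = ((i : ℕ) : ℂ) • tmul (D (std 1)) (std (i - 1)) := by
  have h0 : D (std 0) = 0 := by
    by_cases hm : 0 < m
    · have h := hD (std 0) (std 0)
      rw [tmul_std_std, tmul_one _ hm, tmul_one' _ hm] at h
      have h2 : D (std 0) = D (std 0) + D (std 0) := by simpa using h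
      have := left_eq_add.mp h2
      exact this
    · rw [std_eq_zero 0 (by omega), map_zero]
  intro i
  induction i with
  | zero => simpa using h0
  | succ i ih =>
    have hsplit : (std (i + 1) : Fin m → ℂ) = tmul (std i) (std 1) := by
      rw [tmul_std_std]
    rw [hsplit, hD, ih, tmul_smul_left, tmul_assoc, tmul_std_std, tmul_comm (std i)]
    cases i with
    | zero => simp
    | succ i =>
      have : (i + 1 - 1) + 1 = i + 1 := by omega
      rw [this]
      push_cast
      funext k
      simp only [Pi.smul_apply, Pi.add_apply, smul_eq_mul]
      ring


lemma tmul_sum_left {ι : Type*} [DecidableEq ι] (s : Finset ι) (f : ι → Fin m → ℂ) (w : Fin m → ℂ) :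
    tmul (∑ i ∈ s, f i) w = ∑ i ∈ s, tmul (f i) w := by
  induction s using Finset.induction_on with
  | empty => simp [tmul_zero_left]
  | insert _ _ hb ih => rw [Finset.sum_insert hb, Finset.sum_insert hb, tmul_add_left, ih]

lemma tmul_sum_right {ι : Type*} [DecidableEq ι] (s : Finset ι) (f : ι → Fin m → ℂ) (w : Fin m → ℂ) :
    tmul w (∑ i ∈ s, f i) = ∑ i ∈ s, tmul w (f i) := by
  rw [tmul_comm, tmul_sum_left]
  exact Finset.sum_congr rfl fun i _ => tmul_comm _ _

lemma derivation_eq (D : (Fin m → ℂ) →L[ℂ] (Fin m → ℂ))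
    (hD : ∀ v w, D (tmul v w) = tmul (D v) w + tmul v (D w)) (v : Fin m → ℂ) :
    D v = tmul (D (std 1)) (der v) := by
  conv_lhs => rw [expand v]
  rw [map_sum, tmul_comm, der_sum, tmul_sum_left]
  refine Finset.sum_congr rfl fun i _ => ?_
  rw [map_smul, derivation_std D hD, tmul_smul_left, tmul_comm]
  funext k
  simp only [Pi.smul_apply, smul_eq_mul]
  ring

/-- nc of the derivative-shifted unit: first coefficient -/
lemma nc_zero_eq (v : Fin m → ℂ) (hm : 0 < m) : nc v 0 = v ⟨0, hm⟩ := by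
  simp [nc, hm]

/-- powers with respect to tmul -/
def tpow (v : Fin m → ℂ) : ℕ → Fin m → ℂ
  | 0 => std 0
  | (j + 1) => tmul v (tpow v j)

lemma tpow_nilpotent {v : Fin m → ℂ} (h0 : nc v 0 = 0) :
    ∀ j : ℕ, ∀ k : Fin m, (k : ℕ) < j → tpow v j k = 0 := by
  intro j
  induction j with
  | zero => intro k hk; omega
  | succ j ih =>
    intro k hk
    show tmul v (tpow v j) k = 0
    rw [tmul_apply]
    apply Finset.sum_eq_zero
    intro i hi
    rcases Nat.eq_zero_or_pos i with h | h
    · rw [h, h0, zero_mul]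
    · have hki : (k : ℕ) - i < j := by have := Finset.mem_range.mp hi; omega
      have : nc (tpow v j) ((k : ℕ) - i) = 0 := by
        have hlt : (k : ℕ) - i < m := by have := k.isLt; omega
        rw [nc, dif_pos hlt]
        exact ih ⟨(k : ℕ) - i, hlt⟩ hki
      rw [this, mul_zero]

lemma tpow_m_eq_zero {v : Fin m → ℂ} (h0 : nc v 0 = 0) : tpow v m = 0 := by
  funext k
  exact tpow_nilpotent h0 m k k.isLt

/-- explicit inverse via geometric series -/
def invv (v : Fin m → ℂ) : Fin m → ℂ :=
  (nc v 0)⁻¹ • ∑ j ∈ Finset.range m, tpow (std 0 - (nc v 0)⁻¹ • v) j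

lemma tmul_invv {v : Fin m → ℂ} (hm : 0 < m) (h0 : nc v 0 ≠ 0) :
    tmul v (invv v) = std 0 := by
  set w : Fin m → ℂ := std 0 - (nc v 0)⁻¹ • v with hw
  have hv : v = (nc v 0) • (std 0 - w) := by
    rw [hw]
    funext k
    simp only [Pi.smul_apply, Pi.sub_apply, smul_eq_mul]
    field_simp
    ring
  have hw0 : nc w 0 = 0 := by
    have hval : w ⟨0, hm⟩ = 1 - (nc v 0)⁻¹ * v ⟨0, hm⟩ := by
      simp [hw, std]
    rw [nc_zero_eq _ hm, hval, ← nc_zero_eq v hm]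
    field_simp
    ring
  rw [invv, ← hw, tmul_smul_right]
  have hvv : tmul v (∑ j ∈ Finset.range m, tpow w j)
      = (nc v 0) • tmul (std 0 - w) (∑ j ∈ Finset.range m, tpow w j) := by
    conv_lhs => rw [hv]
    rw [tmul_smul_left]
  rw [hvv, smul_smul, inv_mul_cancel₀ h0, one_smul]
  have hterm : tmul (std 0 - w) (∑ j ∈ Finset.range m, tpow w j)
      = ∑ j ∈ Finset.range m, (tpow w j - tpow w (j + 1)) := by
    rw [tmul_sub_left, tmul_one _ hm, tmul_sum_right, ← Finset.sum_sub_distrib]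
    rfl
  rw [hterm, Finset.sum_range_sub', tpow_m_eq_zero hw0, sub_zero]
  rfl


lemma Yone_eq (hm : 2 ≤ m) (p : Fin m → ℂ) :
    Yone p = tmul (std 1) (der p + std 0) := by
  funext j
  rw [tmul_comm, tmul_std_right _ 1 (by omega)]
  rcases Nat.eq_zero_or_pos (j : ℕ) with hj | hj
  · rw [if_neg (by omega)]
    simp [Yone, hj]
  · rw [if_pos (show 1 ≤ (j : ℕ) by omega)]
    have hjm : (j : ℕ) - 1 < m := by have := j.isLt; omega
    rw [nc, dif_pos hjm]
    have hd : ((⟨(j : ℕ) - 1, hjm⟩ : Fin m) : ℕ) + 1 < m := by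
      simp only [Fin.val_mk]; have := j.isLt; omega
    simp only [Pi.add_apply, der, dif_pos hd, std, Fin.val_mk, Yone]
    have hfin : (⟨(j : ℕ) - 1 + 1, hd⟩ : Fin m) = j := Fin.ext (by simp only [Fin.val_mk]; omega)
    rw [hfin]
    by_cases h1 : (j : ℕ) = 1
    · rw [if_pos h1, if_pos (by omega), h1]
      norm_num
    · rw [if_neg h1, if_neg (by omega)]
      have : ((j : ℕ) - 1 + 1 : ℕ) = (j : ℕ) := by omega
      rw [this, add_zero]

lemma Ysym_eq (hm : 2 ≤ m) (k : ℕ) (p : Fin m → ℂ) :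
    Ysym (k + 1) p = tmul (std (k + 1)) (der p + std 0) := by
  cases k with
  | zero =>
    show Yone p = _
    rw [Yone_eq hm]
  | succ k =>
    show tmul (std (k + 2 - 1)) (Yone p) = _
    rw [Yone_eq hm, ← tmul_assoc, tmul_std_std]
    norm_num

lemma der_Efield (hm : 2 ≤ m) (a : ℂ) (p : Fin m → ℂ) :
    der (Efield a p) = der p + std 0 := by
  funext j
  simp only [Efield, der, Pi.add_apply, Pi.smul_apply, std, smul_eq_mul]
  by_cases h : (j : ℕ) + 1 < m
  · rw [dif_pos h, dif_pos h]
    rw [if_neg (by omega)]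
    by_cases h0 : (j : ℕ) = 0
    · rw [if_pos (by omega), if_pos h0]
      have hc : (((j : ℕ) : ℕ) : ℂ) = 0 := by rw [h0]; norm_num
      push_cast
      rw [hc]; ring
    · rw [if_neg (by omega), if_neg h0]
      push_cast; ring
  · rw [dif_neg h, dif_neg h]
    rw [if_neg (by have := j.isLt; omega)]
    ring

lemma nc_phi0 (hm : 2 ≤ m) (p : Fin m → ℂ) :
    nc (der p + std 0) 0 = p ⟨1, by omega⟩ + 1 := by
  have h0 : (0 : ℕ) < m := by omega
  rw [nc_zero_eq _ h0]
  simp only [Pi.add_apply, der, std, Fin.val_mk]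
  rw [dif_pos (by omega : (0 : ℕ) + 1 < m)]
  norm_num

lemma tmul_der_zero (hm : 0 < m) (c : Fin m → ℂ) :
    tmul c (der (0 : Fin m → ℂ) + std 0) = c := by
  rw [der_zero, zero_add, tmul_one' _ hm]


/-- tmul as a bilinear map -/
def tmulLin : (Fin m → ℂ) →ₗ[ℂ] (Fin m → ℂ) →ₗ[ℂ] (Fin m → ℂ) :=
  LinearMap.mk₂ ℂ tmul tmul_add_left tmul_smul_left tmul_add_right tmul_smul_right

/-- tmul as a continuous bilinear map -/
def tmulCLM : (Fin m → ℂ) →L[ℂ] (Fin m → ℂ) →L[ℂ] (Fin m → ℂ) :=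
  LinearMap.toContinuousLinearMap
    { toFun := fun u => LinearMap.toContinuousLinearMap (tmulLin u)
      map_add' := fun u u' => by
        apply ContinuousLinearMap.ext; intro w
        show tmul (u + u') w = tmul u w + tmul u' w
        exact tmul_add_left u u' w
      map_smul' := fun c u => by
        apply ContinuousLinearMap.ext; intro w
        show tmul (c • u) w = c • tmul u w
        exact tmul_smul_left c u w }

@[simp] lemma tmulCLM_apply (v w : Fin m → ℂ) : tmulCLM v w = tmul v w := rfl

/-- der as a continuous linear map -/
def derCLM : (Fin m → ℂ) →L[ℂ] (Fin m → ℂ) :=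
  LinearMap.toContinuousLinearMap derLin

@[simp] lemma derCLM_apply (v : Fin m → ℂ) : derCLM v = der v := rfl

lemma hasFDerivAt_tmul {f g : (Fin m → ℂ) → (Fin m → ℂ)} {p : Fin m → ℂ}
    {f' g' : (Fin m → ℂ) →L[ℂ] (Fin m → ℂ)}
    (hf : HasFDerivAt f f' p) (hg : HasFDerivAt g g' p) :
    HasFDerivAt (fun x => tmul (f x) (g x))
      (((tmulCLM (f p)).comp g') + (tmulCLM.comp f').flip (g p)) p := by
  have hc : HasFDerivAt (fun x => tmulCLM (f x)) (tmulCLM.comp f') p :=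
    tmulCLM.hasFDerivAt.comp p hf
  exact hc.clm_apply hg

lemma differentiableAt_tmul {f g : (Fin m → ℂ) → (Fin m → ℂ)} {p : Fin m → ℂ}
    (hf : DifferentiableAt ℂ f p) (hg : DifferentiableAt ℂ g p) :
    DifferentiableAt ℂ (fun x => tmul (f x) (g x)) p :=
  (hasFDerivAt_tmul hf.hasFDerivAt hg.hasFDerivAt).differentiableAt

lemma differentiableAt_tpow {f : (Fin m → ℂ) → (Fin m → ℂ)} {p : Fin m → ℂ}
    (hf : DifferentiableAt ℂ f p) (j : ℕ) :
    DifferentiableAt ℂ (fun x => tpow (f x) j) p := by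
  induction j with
  | zero => exact differentiableAt_const _
  | succ j ih => exact differentiableAt_tmul hf ih

lemma hasFDerivAt_Efield (a : ℂ) (p : Fin m → ℂ) :
    HasFDerivAt (Efield a) (ContinuousLinearMap.id ℂ (Fin m → ℂ)) p := by
  have : HasFDerivAt (fun q : Fin m → ℂ => q + a • std 0 + std 1)
      (ContinuousLinearMap.id ℂ (Fin m → ℂ)) p :=
    ((hasFDerivAt_id p).add_const (a • std 0)).add_const (std 1)
  exact this


lemma isPreconnected_punctured_ball (c a : ℂ) (r : ℝ) :
    IsPreconnected (Metric.ball c r \ {a}) := by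
  by_cases ha : a ∈ Metric.ball c r
  swap
  · rw [Set.diff_singleton_eq_self ha]
    exact (convex_ball c r).isPreconnected
  have hrank : 1 < Module.rank ℝ ℂ := by
    rw [Complex.rank_real_complex]
    exact_mod_cast (by norm_num : (1:ℕ) < 2)
  obtain ⟨δ, hδ0, hδsub⟩ : ∃ δ > 0, Metric.ball a δ ⊆ Metric.ball c r :=
    Metric.mem_nhds_iff.mp (Metric.isOpen_ball.mem_nhds ha)
  set P : Set ℂ := Metric.ball a δ \ {a} with hP
  have hPpre : IsPreconnected P := by
    have hS : IsPathConnected (Metric.sphere a (δ / 2)) :=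
      isPathConnected_sphere hrank a (by positivity)
    have himg : P = (fun q : ℝ × ℂ => a + q.1 • (q.2 - a)) '' (Set.Ioo (0 : ℝ) 2 ×ˢ Metric.sphere a (δ / 2)) := by
      apply Set.Subset.antisymm
      · rintro w ⟨hwball, hwa⟩
        simp only [Set.mem_singleton_iff] at hwa
        have hd : 0 < dist w a := dist_pos.mpr hwa
        refine ⟨⟨2 * dist w a / δ, a + (δ / (2 * dist w a)) • (w - a)⟩, ⟨⟨by positivity, ?_⟩, ?_⟩, ?_⟩
        · have : dist w a < δ := Metric.mem_ball.mp hwball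
          rw [div_lt_iff₀ hδ0]
          linarith
        · simp only [Metric.mem_sphere, dist_eq_norm, add_sub_cancel_left, norm_smul,
            Real.norm_eq_abs]
          have hd' : 0 < ‖w - a‖ := by rwa [← dist_eq_norm]
          rw [abs_of_pos (div_pos hδ0 (mul_pos two_pos hd')), ← dist_eq_norm]
          field_simp
        · simp only [add_sub_cancel_left, smul_smul]
          have hne : (2 * dist w a / δ) * (δ / (2 * dist w a)) = 1 := by
            field_simp
          rw [hne, one_smul, add_sub_cancel]
      · rintro w ⟨⟨t, z⟩, ⟨⟨ht0, ht2⟩, hz⟩, rfl⟩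
        have hz' : dist z a = δ / 2 := Metric.mem_sphere.mp hz
        have hza : ‖z - a‖ = δ / 2 := by rwa [← dist_eq_norm]
        constructor
        · rw [Metric.mem_ball, dist_eq_norm, add_sub_cancel_left, norm_smul, Real.norm_eq_abs,
            abs_of_pos ht0, hza]
          nlinarith
        · simp only [Set.mem_singleton_iff, add_eq_left]
          intro hc
          rcases smul_eq_zero.mp hc with h | h
          · exact absurd h (ne_of_gt ht0)
          · rw [sub_eq_zero] at h
            rw [h] at hza
            simp at hza
            linarith
    rw [himg]
    exact (isPreconnected_Ioo.prod hS.isConnected.isPreconnected).image _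
      (continuous_const.add (continuous_fst.smul (continuous_snd.sub continuous_const))).continuousOn
  -- common point
  set z₀ : ℂ := a + (δ / 2 : ℝ) • (1 : ℂ) with hz₀
  have hz₀P : z₀ ∈ P := by
    constructor
    · rw [Metric.mem_ball, dist_eq_norm, hz₀, add_sub_cancel_left, norm_smul]
      simp only [norm_one, mul_one, Real.norm_eq_abs, abs_of_pos (by positivity : (0:ℝ) < δ / 2)]
      linarith
    · simp only [Set.mem_singleton_iff, hz₀, add_eq_left]
      intro hc
      rcases smul_eq_zero.mp hc with h | h
      · simp at h; linarith
      · simp at h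
  -- pieces
  have key : Metric.ball c r \ {a}
      = ⋃₀ ((fun x => segment ℝ x (a + (min 1 (δ / (2 * dist x a))) • (x - a)) ∪ P) ''
          (Metric.ball c r \ {a})) := by
    apply Set.Subset.antisymm
    · intro x hx
      exact Set.mem_sUnion.mpr ⟨_, Set.mem_image_of_mem _ hx, Or.inl (by
        simpa using left_mem_segment ℝ x _)⟩
    · intro y hy
      rcases Set.mem_sUnion.mp hy with ⟨S, ⟨x, hx, rfl⟩, hyS⟩
      rcases hx with ⟨hxball, hxa⟩
      simp only [Set.mem_singleton_iff] at hxa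
      have hdx : 0 < dist x a := dist_pos.mpr hxa
      set t₀ : ℝ := min 1 (δ / (2 * dist x a)) with ht₀
      have ht₀0 : 0 < t₀ := lt_min one_pos (by positivity)
      have ht₀1 : t₀ ≤ 1 := min_le_left _ _
      rcases hyS with hseg | hyP
      · rw [segment_eq_image' ℝ x _] at hseg
        obtain ⟨s, ⟨hs0, hs1⟩, rfl⟩ := hseg
        have hrw : a + t₀ • (x - a) - x = (t₀ - 1) • (x - a) := by
          rw [sub_smul, one_smul]
          module
        rw [hrw]
        set lam : ℝ := 1 + s * (t₀ - 1) with hlam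
        have hlam0 : 0 < lam := by nlinarith
        have hlam1 : lam ≤ 1 := by nlinarith
        have hform : x + s • (t₀ - 1) • (x - a) = a + lam • (x - a) := by
          simp only [hlam]
          module
        show x + s • ((t₀ - 1) • (x - a)) ∈ _
        rw [hform]
        constructor
        · have : a + lam • (x - a) = (1 - lam) • a + lam • x := by module
          rw [this]
          exact (convex_ball c r) ha hxball (by linarith) (le_of_lt hlam0) (by ring)
        · simp only [Set.mem_singleton_iff, add_eq_left]
          intro hc
          rcases smul_eq_zero.mp hc with h | h
          · exact absurd h (ne_of_gt hlam0)
          · exact hxa (by rwa [sub_eq_zero] at h)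
      · exact ⟨hδsub hyP.1, hyP.2⟩
  rw [key]
  apply isPreconnected_sUnion z₀
  · rintro S ⟨x, hx, rfl⟩
    exact Or.inr hz₀P
  · rintro S ⟨x, hx, rfl⟩
    rcases hx with ⟨hxball, hxa⟩
    simp only [Set.mem_singleton_iff] at hxa
    have hdx : 0 < dist x a := dist_pos.mpr hxa
    apply IsPreconnected.union (a + (min 1 (δ / (2 * dist x a))) • (x - a))
    · exact right_mem_segment ℝ _ _
    · constructor
      · rw [Metric.mem_ball, dist_eq_norm, add_sub_cancel_left, norm_smul, Real.norm_eq_abs]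
        have h1 : min 1 (δ / (2 * dist x a)) ≤ δ / (2 * dist x a) := min_le_right _ _
        have h2 : 0 < min 1 (δ / (2 * dist x a)) := lt_min one_pos (by positivity)
        rw [abs_of_pos h2, ← dist_eq_norm]
        calc min 1 (δ / (2 * dist x a)) * dist x a ≤ (δ / (2 * dist x a)) * dist x a := by
              apply mul_le_mul_of_nonneg_right h1 (le_of_lt hdx)
          _ = δ / 2 := by field_simp
          _ < δ := by linarith
      · simp only [Set.mem_singleton_iff, add_eq_left]
        intro hc
        rcases smul_eq_zero.mp hc with h | h
        · have h2 : 0 < min 1 (δ / (2 * dist x a)) := lt_min one_pos (by positivity)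
          exact absurd h (ne_of_gt h2)
        · exact hxa (by rwa [sub_eq_zero] at h)
    · exact (convex_segment _ _).isPreconnected
    · exact hPpre


lemma isPreconnected_good_ball (hm : 2 ≤ m) (q : Fin m → ℂ) {r : ℝ} (hr : 0 < r) :
    IsPreconnected (Metric.ball q r ∩ {p : Fin m → ℂ | p ⟨1, by omega⟩ ≠ -1}) := by
  set i1 : Fin m := ⟨1, by omega⟩ with hi1
  set s : Fin m → Set ℂ := fun i => if i = i1 then Metric.ball (q i) r \ {-1} else Metric.ball (q i) r
    with hs
  have hsets : Metric.ball q r ∩ {p : Fin m → ℂ | p i1 ≠ -1} = Set.pi Set.univ s := by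
    ext p
    rw [ball_pi _ hr]
    simp only [Set.mem_inter_iff, Set.mem_pi, Set.mem_univ, forall_true_left, Set.mem_setOf_eq, hs]
    constructor
    · rintro ⟨hball, hgood⟩ i
      by_cases hi : i = i1
      · rw [if_pos hi, hi]
        exact ⟨hball i1, hgood⟩
      · rw [if_neg hi]
        exact hball i
    · intro hall
      constructor
      · intro i
        have := hall i
        by_cases hi : i = i1
        · rw [if_pos hi] at this
          subst hi
          exact this.1
        · rwa [if_neg hi] at this
      · have := hall i1
        rw [if_pos rfl] at this
        exact this.2
  rw [hsets]
  apply isPreconnected_univ_pi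
  intro i
  by_cases hi : i = i1
  · rw [hs]; simp only
    rw [if_pos hi]
    exact isPreconnected_punctured_ball _ _ _
  · rw [hs]; simp only
    rw [if_neg hi]
    exact (convex_ball _ _).isPreconnected

lemma norm_std_le_one (hm : 2 ≤ m) : ‖(std 1 : Fin m → ℂ)‖ ≤ 1 := by
  rw [pi_norm_le_iff_of_nonneg zero_le_one]
  intro i
  simp only [std]
  split <;> simp

lemma exists_good (hm : 2 ≤ m) {O : Set (Fin m → ℂ)} (hO : IsOpen O) {v : Fin m → ℂ}
    (hv : v ∈ O) : ∃ x ∈ O, x ⟨1, by omega⟩ ≠ -1 := by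
  by_cases hgood : v ⟨1, by omega⟩ ≠ -1
  · exact ⟨v, hv, hgood⟩
  push_neg at hgood
  obtain ⟨ε, hε0, hεsub⟩ := Metric.isOpen_iff.mp hO v hv
  refine ⟨v + ((ε / 2 : ℝ) : ℂ) • std 1, hεsub ?_, ?_⟩
  · rw [Metric.mem_ball, dist_eq_norm, add_sub_cancel_left, norm_smul]
    calc ‖((ε / 2 : ℝ) : ℂ)‖ * ‖(std 1 : Fin m → ℂ)‖ ≤ ‖((ε / 2 : ℝ) : ℂ)‖ * 1 := by
          apply mul_le_mul_of_nonneg_left (norm_std_le_one hm) (norm_nonneg _)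
      _ = ε / 2 := by
          rw [mul_one, Complex.norm_real, Real.norm_eq_abs, abs_of_pos (by positivity)]
      _ < ε := by linarith
  · intro hc
    simp only [Pi.add_apply, Pi.smul_apply, std, smul_eq_mul, hgood] at hc
    rw [if_true] at hc
    have h2 : ((ε / 2 : ℝ) : ℂ) = 0 := by linear_combination hc
    rw [Complex.ofReal_eq_zero] at h2
    linarith


lemma KLL (hm : 2 ≤ m) {U : Set (Fin m → ℂ)}
    {X : (Fin m → ℂ) → Fin m → ℂ}
    (hX : ∀ p ∈ U, DifferentiableAt ℂ X p)
    (hrep : ∀ p ∈ U, X p = tmul (fderiv ℂ X p (std 1)) (der p + std 0))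
    (hder2 : ∀ p ∈ U, ∀ u, fderiv ℂ X p u = tmul (fderiv ℂ X p (std 1)) (der u))
    {q : Fin m → ℂ} {r : ℝ} (hr : 0 < r) (hball : Metric.ball q r ⊆ U) :
    ∃ c, ∀ p ∈ Metric.ball q r, X p = tmul c (der p + std 0) := by
  have hm0 : 0 < m := by omega
  set i1 : Fin m := ⟨1, by omega⟩ with hi1
  set φ : (Fin m → ℂ) → Fin m → ℂ := fun p => der p + std 0 with hφ
  set D' : Set (Fin m → ℂ) := Metric.ball q r ∩ {p | p i1 ≠ -1} with hD'
  have hD'open : IsOpen D' :=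
    Metric.isOpen_ball.inter (IsOpen.preimage (continuous_apply i1) isOpen_ne)
  have hD'U : D' ⊆ U := fun p hp => hball hp.1
  have hgood : ∀ p ∈ D', nc (φ p) 0 ≠ 0 := by
    intro p hp hc
    rw [hφ, nc_phi0 hm] at hc
    exact hp.2 (eq_neg_of_add_eq_zero_left hc)
  -- differentiable version of the inverse
  set inv' : (Fin m → ℂ) → Fin m → ℂ := fun p =>
    (p i1 + 1)⁻¹ • ∑ j ∈ Finset.range m, tpow (std 0 - (p i1 + 1)⁻¹ • φ p) j with hinv'
  have hinveq : ∀ p : Fin m → ℂ, invv (φ p) = inv' p := by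
    intro p
    rw [invv, hφ, nc_phi0 hm]
  have hinvmul : ∀ p ∈ D', tmul (φ p) (inv' p) = std 0 := by
    intro p hp
    rw [← hinveq]
    exact tmul_invv hm0 (hgood p hp)
  set h : (Fin m → ℂ) → Fin m → ℂ := fun p => tmul (X p) (inv' p) with hh
  have hφdiff : ∀ p : Fin m → ℂ, DifferentiableAt ℂ φ p := by
    intro p
    have : DifferentiableAt ℂ (fun x : Fin m → ℂ => derCLM x + std 0) p :=
      derCLM.differentiableAt.add_const _
    exact this
  have happ : ∀ p : Fin m → ℂ, DifferentiableAt ℂ (fun x : Fin m → ℂ => x i1) p := by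
    intro p
    exact (ContinuousLinearMap.proj (R := ℂ) (φ := fun _ : Fin m => ℂ) i1).differentiableAt
  have hdiff : ∀ p ∈ D', DifferentiableAt ℂ h p := by
    intro p hp
    have hσ : DifferentiableAt ℂ (fun x : Fin m → ℂ => x i1 + 1) p :=
      (happ p).add_const 1
    have hσne : p i1 + 1 ≠ 0 := by
      intro hc; exact hp.2 (eq_neg_of_add_eq_zero_left hc)
    have hσinv : DifferentiableAt ℂ (fun x : Fin m → ℂ => (x i1 + 1)⁻¹) p := hσ.inv hσne
    have hw : DifferentiableAt ℂ (fun x : Fin m → ℂ => std 0 - (x i1 + 1)⁻¹ • φ x) p :=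
      (differentiableAt_const _).sub (hσinv.smul (hφdiff p))
    have hsum : DifferentiableAt ℂ
        (fun x : Fin m → ℂ => ∑ j ∈ Finset.range m, tpow (std 0 - (x i1 + 1)⁻¹ • φ x) j) p :=
      DifferentiableAt.fun_sum (fun j _ => differentiableAt_tpow hw j)
    exact differentiableAt_tmul (hX p (hD'U hp)) (hσinv.smul hsum)
  have hhg : ∀ p ∈ D', h p = fderiv ℂ X p (std 1) := by
    intro p hp
    rw [hh]
    simp only
    rw [hrep p (hD'U hp), tmul_assoc, hinvmul p hp, tmul_one' _ hm0]
  have hXH : ∀ x ∈ D', X x = tmul (h x) (φ x) := by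
    intro x hx
    rw [hhg x hx, ← hrep x (hD'U hx)]
  have hφd : ∀ p : Fin m → ℂ, HasFDerivAt φ derCLM p := by
    intro p
    have : HasFDerivAt (fun x : Fin m → ℂ => derCLM x + std 0) derCLM p :=
      derCLM.hasFDerivAt.add_const _
    exact this
  have hzero : ∀ p ∈ D', fderiv ℂ h p = 0 := by
    intro p hp
    set Dh := fderiv ℂ h p with hDh
    have hhd : HasFDerivAt h Dh p := (hdiff p hp).hasFDerivAt
    have hprod := hasFDerivAt_tmul hhd (hφd p)
    have hev : X =ᶠ[𝓝 p] fun x => tmul (h x) (φ x) :=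
      Filter.eventuallyEq_of_mem (hD'open.mem_nhds hp) hXH
    have heq : fderiv ℂ X p = _ := hev.fderiv_eq.trans hprod.fderiv
    apply ContinuousLinearMap.ext
    intro u
    have happly := congrFun (congrArg DFunLike.coe heq) u
    rw [hder2 p (hD'U hp) u, ← hhg p hp] at happly
    simp only [ContinuousLinearMap.add_apply, ContinuousLinearMap.coe_comp', Function.comp_apply,
      ContinuousLinearMap.flip_apply, tmulCLM_apply, derCLM_apply] at happly
    have hc : tmul (Dh u) (φ p) = 0 := by
      have := happly
      rw [left_eq_add] at this
      exact this
    rw [ContinuousLinearMap.zero_apply]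
    exact cancel (hgood p hp) hc
  have hconst : ∀ p ∈ D', ∀ᶠ x in 𝓝 p, h x = h p := by
    intro p hp
    obtain ⟨ε, hε0, hεsub⟩ := Metric.isOpen_iff.mp hD'open p hp
    filter_upwards [Metric.ball_mem_nhds p hε0] with x hx
    exact Convex.is_const_of_fderivWithin_eq_zero (convex_ball p ε)
      (fun y hy => (hdiff y (hεsub hy)).differentiableWithinAt)
      (fun y hy => by
        rw [DifferentiableAt.fderivWithin (hdiff y (hεsub hy))
          (Metric.isOpen_ball.uniqueDiffWithinAt hy)]
        exact hzero y (hεsub hy))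
      hx (Metric.mem_ball_self hε0)
  obtain ⟨x₀, hx₀ball, hx₀good⟩ := exists_good hm Metric.isOpen_ball (Metric.mem_ball_self hr)
  have hx₀D' : x₀ ∈ D' := ⟨hx₀ball, hx₀good⟩
  have hpre : IsPreconnected D' := isPreconnected_good_ball hm q hr
  set V : Set (Fin m → ℂ) := {x | ∀ᶠ y in 𝓝 x, h y = h x₀} with hV
  have hVopen : IsOpen V := isOpen_setOf_eventually_nhds
  have hsub : D' ⊆ V := by
    apply hpre.subset_of_closure_inter_subset hVopen
    · exact ⟨x₀, hx₀D', hconst x₀ hx₀D'⟩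
    · rintro x ⟨hxcl, hxD'⟩
      have hloc := hconst x hxD'
      obtain ⟨O, hOsub, hOopen, hxO⟩ := eventually_nhds_iff.mp hloc
      obtain ⟨v, hvO, hvV⟩ := mem_closure_iff.mp hxcl O hOopen hxO
      have hvx : h v = h x := hOsub v hvO
      have hvx₀ : h v = h x₀ := hvV.self_of_nhds
      show x ∈ V
      filter_upwards [hloc] with y hy
      rw [hy, ← hvx, hvx₀]
  have hval : ∀ p ∈ D', h p = h x₀ := fun p hp => ((hsub hp).self_of_nhds : h p = h x₀)
  refine ⟨h x₀, ?_⟩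
  have hXD' : ∀ p ∈ D', X p = tmul (h x₀) (φ p) := by
    intro p hp
    rw [← hval p hp]
    exact hXH p hp
  intro p hp
  by_cases hpg : p i1 ≠ -1
  · exact hXD' p ⟨hp, hpg⟩
  push_neg at hpg
  -- continuity through the bad hyperplane
  haveI : (𝓝[≠] (0 : ℂ)).NeBot := Module.punctured_nhds_neBot ℂ ℂ 0
  set L : ℂ → (Fin m → ℂ) := fun t => p + t • std 1 with hLdef
  have hLcont : Continuous L := by
    apply continuous_const.add
    exact continuous_id.smul continuous_const
  have hL0 : L 0 = p := by rw [hLdef]; simp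
  obtain ⟨ε, hε0, hεsub⟩ := Metric.isOpen_iff.mp Metric.isOpen_ball p hp
  have hLball : ∀ t : ℂ, ‖t‖ < ε → L t ∈ Metric.ball q r := by
    intro t ht
    apply hεsub
    rw [Metric.mem_ball, dist_eq_norm, hLdef]
    simp only [add_sub_cancel_left]
    calc ‖t • (std 1 : Fin m → ℂ)‖ = ‖t‖ * ‖(std 1 : Fin m → ℂ)‖ := norm_smul _ _
      _ ≤ ‖t‖ * 1 := mul_le_mul_of_nonneg_left (norm_std_le_one hm) (norm_nonneg _)
      _ < ε := by rwa [mul_one]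
  have hLgood : ∀ t : ℂ, t ≠ 0 → (L t) i1 ≠ -1 := by
    intro t ht
    have : (L t) i1 = p i1 + t := by
      rw [hLdef]
      simp only [Pi.add_apply, Pi.smul_apply, std, smul_eq_mul, if_true, mul_one]
      simp [hi1]
    rw [this, hpg]
    intro hc
    exact ht (by linear_combination hc)
  have hfeq : ∀ᶠ t in 𝓝[≠] (0 : ℂ), X (L t) = tmul (h x₀) (φ (L t)) := by
    rw [eventually_nhdsWithin_iff]
    have hball0 : ∀ᶠ t in 𝓝 (0 : ℂ), ‖t‖ < ε := by
      filter_upwards [Metric.ball_mem_nhds (0 : ℂ) hε0] with t ht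
      simpa [dist_eq_norm] using ht
    filter_upwards [hball0] with t ht hne
    exact hXD' (L t) ⟨hLball t ht, hLgood t hne⟩
  have hφcont : Continuous φ := by
    have : Continuous (fun x : Fin m → ℂ => derCLM x + std 0) :=
      derCLM.continuous.add continuous_const
    exact this
  have h1 : Filter.Tendsto (fun t => X (L t)) (𝓝[≠] (0 : ℂ)) (𝓝 (X p)) := by
    have hXc : ContinuousAt X p := (hX p (hball hp)).continuousAt
    have hc : ContinuousAt (fun t => X (L t)) 0 := by
      apply ContinuousAt.comp
      · rw [hL0]; exact hXc
      · exact hLcont.continuousAt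
    have h2 : Filter.Tendsto (fun t => X (L t)) (𝓝[≠] (0 : ℂ)) (𝓝 ((fun t => X (L t)) 0)) :=
      hc.continuousWithinAt (s := {(0 : ℂ)}ᶜ)
    simp only [hL0] at h2
    exact h2
  have h2 : Filter.Tendsto (fun t => X (L t)) (𝓝[≠] (0 : ℂ)) (𝓝 (tmul (h x₀) (φ p))) := by
    have hRc : Continuous (fun x : Fin m → ℂ => tmul (h x₀) (φ x)) := by
      have : Continuous (fun x : Fin m → ℂ => tmulCLM (h x₀) (φ x)) :=
        (tmulCLM (h x₀)).continuous.comp hφcont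
      exact this
    have hcomp : ContinuousAt (fun t => tmul (h x₀) (φ (L t))) 0 :=
      ((hRc.comp hLcont).continuousAt)
    have h3 : Filter.Tendsto (fun t => tmul (h x₀) (φ (L t))) (𝓝[≠] (0 : ℂ))
        (𝓝 ((fun t => tmul (h x₀) (φ (L t))) 0)) :=
      hcomp.continuousWithinAt (s := {(0 : ℂ)}ᶜ)
    simp only [hL0] at h3
    exact h3.congr' (hfeq.mono fun t ht => ht.symm)
  exact tendsto_nhds_unique h1 h2

end Stmt7aux


open Stmt7aux

/-- (Proposition 30 of the paper.) Let `m ≥ 2`, `U ⊆ ℂ^m` a connected open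
neighborhood of `0`, and `X` a holomorphic vector field on `U` with `[X,E] = 0` on `U` and
`L_X(∘)(Y,Z) = 0` on `U` for all differentiable vector fields `Y, Z` on `U`. Then there are
unique constants `c_1, …, c_{m−1} ∈ ℂ` with `X = Σ_{k=1}^{m−1} c_k·Y_k` on `U`: the fields
`Y_1, …, Y_{m−1}` form a basis of the Lie algebra of infinitesimal symmetries of the
standard model near `0`. -/
theorem stmt7 {m : ℕ} (hm : 2 ≤ m) (a : ℂ)
    (U : Set (Fin m → ℂ)) (hUopen : IsOpen U) (hUconn : IsConnected U)
    (hU0 : (0 : Fin m → ℂ) ∈ U)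
    (X : (Fin m → ℂ) → Fin m → ℂ)
    (hX : ∀ p ∈ U, DifferentiableAt ℂ X p)
    (hXE : ∀ p ∈ U, bracket X (Efield a) p = 0)
    (hXmul : ∀ Y Z : (Fin m → ℂ) → Fin m → ℂ,
      (∀ p ∈ U, DifferentiableAt ℂ Y p) → (∀ p ∈ U, DifferentiableAt ℂ Z p) →
      ∀ p ∈ U, lieD X Y Z p = 0) :
    ∃! c : Fin (m - 1) → ℂ,
      ∀ p ∈ U, X p = ∑ k : Fin (m - 1), c k • Ysym ((k : ℕ) + 1) p := by
  classical
  obtain ⟨n, rfl⟩ : ∃ n, m = n + 2 := ⟨m - 2, by omega⟩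
  have hm0 : 0 < n + 2 := by omega
  -- the derivative of X is a derivation of the algebra at every point of U
  have hder : ∀ p ∈ U, ∀ v w : Fin (n + 2) → ℂ,
      fderiv ℂ X p (tmul v w) = tmul (fderiv ℂ X p v) w + tmul v (fderiv ℂ X p w) := by
    intro p hp v w
    have h0 := hXmul (fun _ => v) (fun _ => w) (fun _ _ => differentiableAt_const _)
      (fun _ _ => differentiableAt_const _) p hp
    have hbC : ∀ u : Fin (n + 2) → ℂ, bracket X (fun _ => u) p = -(fderiv ℂ X p u) := by
      intro u
      simp [bracket, fderiv_const_apply]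
    have hbvw : bracket X (pmul (fun _ => v) (fun _ => w)) p = -(fderiv ℂ X p (tmul v w)) :=
      hbC (tmul v w)
    simp only [lieD] at h0
    rw [hbvw, hbC v, hbC w] at h0
    have hnr : ∀ x y : Fin (n + 2) → ℂ, tmul x (-y) = -(tmul x y) := by
      intro x y
      rw [tmul_comm, tmul_neg_left, tmul_comm]
    rw [tmul_neg_left, hnr] at h0
    have h1 : (tmul (fderiv ℂ X p v) w + tmul v (fderiv ℂ X p w)) - fderiv ℂ X p (tmul v w)
        = 0 := by
      rw [← h0]; abel
    exact (sub_eq_zero.mp h1).symm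
  -- [X,E] = 0 gives the representation of X in terms of its derivative
  have hXF : ∀ p ∈ U, X p = fderiv ℂ X p (Efield a p) := by
    intro p hp
    have h0 := hXE p hp
    simp only [bracket] at h0
    rw [(hasFDerivAt_Efield a p).fderiv] at h0
    have h1 := sub_eq_zero.mp h0
    simpa using h1
  have hder2 : ∀ p ∈ U, ∀ u, fderiv ℂ X p u = tmul (fderiv ℂ X p (std 1)) (der u) :=
    fun p hp u => derivation_eq (fderiv ℂ X p) (hder p hp) u
  have hrep : ∀ p ∈ U, X p = tmul (fderiv ℂ X p (std 1)) (der p + std 0) := by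
    intro p hp
    rw [hXF p hp, hder2 p hp (Efield a p), der_Efield hm]
  set g : Fin (n + 2) → ℂ := X 0 with hgdef
  have hgF : g = fderiv ℂ X 0 (std 1) := by
    rw [hgdef, hrep 0 hU0, der_zero, zero_add, tmul_one' _ hm0]
  -- globalization
  have hKLL : ∀ q : Fin (n + 2) → ℂ, ∀ r : ℝ, 0 < r → Metric.ball q r ⊆ U →
      ∃ c, ∀ p ∈ Metric.ball q r, X p = tmul c (der p + std 0) :=
    fun q r hr hb => KLL hm hX hrep hder2 hr hb
  set V : Set (Fin (n + 2) → ℂ) :=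
    {x | ∀ᶠ y in nhds x, y ∈ U → X y = tmul g (der y + std 0)} with hV
  have hVopen : IsOpen V := isOpen_setOf_eventually_nhds
  have hUV : U ⊆ V := by
    apply hUconn.isPreconnected.subset_of_closure_inter_subset hVopen
    · obtain ⟨r0, hr00, hr0sub⟩ := Metric.isOpen_iff.mp hUopen 0 hU0
      have hrpos : 0 < min r0 1 := lt_min hr00 one_pos
      have hrsub : Metric.ball 0 (min r0 1) ⊆ U :=
        subset_trans (Metric.ball_subset_ball (min_le_left _ _)) hr0sub
      obtain ⟨c, hc⟩ := hKLL 0 (min r0 1) hrpos hrsub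
      have hc0 : c = g := by
        have h1 := hc 0 (Metric.mem_ball_self hrpos)
        rw [tmul_der_zero hm0] at h1
        rw [hgdef, h1]
      refine ⟨0, hU0, ?_⟩
      show ∀ᶠ y in nhds 0, y ∈ U → X y = tmul g (der y + std 0)
      filter_upwards [Metric.ball_mem_nhds 0 hrpos] with y hy _
      rw [← hc0]
      exact hc y hy
    · rintro x ⟨hxcl, hxU⟩
      obtain ⟨r, hrpos, hrsub⟩ := Metric.isOpen_iff.mp hUopen x hxU
      obtain ⟨c, hc⟩ := hKLL x r hrpos hrsub
      obtain ⟨v, hvball, hvV⟩ := mem_closure_iff.mp hxcl (Metric.ball x r)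
        Metric.isOpen_ball (Metric.mem_ball_self hrpos)
      obtain ⟨O, hOsub, hOopen, hvO⟩ := eventually_nhds_iff.mp hvV
      obtain ⟨z, hzOB, hzgood⟩ := exists_good hm (hOopen.inter Metric.isOpen_ball)
        (Set.mem_inter hvO hvball)
      have hzU : z ∈ U := hrsub hzOB.2
      have hPz : X z = tmul g (der z + std 0) := hOsub z hzOB.1 hzU
      have hXz : X z = tmul c (der z + std 0) := hc z hzOB.2
      have hncz : nc (der z + std 0) 0 ≠ 0 := by
        rw [nc_phi0 hm]
        intro hcontra
        exact hzgood (eq_neg_of_add_eq_zero_left hcontra)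
      have hcg : c = g := cancel' hncz (by rw [← hXz, ← hPz])
      show x ∈ V
      filter_upwards [Metric.ball_mem_nhds x hrpos] with y hy _
      rw [← hcg]
      exact hc y hy
  have hglob : ∀ p ∈ U, X p = tmul g (der p + std 0) := by
    intro p hp
    exact (hUV hp).self_of_nhds hp
  -- the constant term of g vanishes
  have hg0 : g 0 = 0 := by
    have hstd := derivation_std (fderiv ℂ X 0) (hder 0 hU0) (n + 2)
    rw [std_eq_zero (n + 2) le_rfl, map_zero] at hstd
    have hidx : (n + 2) - 1 = n + 1 := by omega
    rw [hidx] at hstd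
    have hcast : ((n + 2 : ℕ) : ℂ) ≠ 0 := Nat.cast_ne_zero.mpr (by omega)
    have hzz : tmul (fderiv ℂ X 0 (std 1)) (std (n + 1)) = 0 := by
      rcases smul_eq_zero.mp hstd.symm with h | h
      · exact absurd h hcast
      · exact h
    have h1 : tmul g (std (n + 1)) = 0 := by rw [hgF]; exact hzz
    have h2 := congrFun h1 ⟨n + 1, by omega⟩
    rw [tmul_std_right g (n + 1) (by omega)] at h2
    simp only [Fin.val_mk, le_refl, if_pos, Nat.sub_self] at h2
    rw [nc_zero_eq g hm0] at h2
    rw [show (0 : Fin (n + 2)) = ⟨0, hm0⟩ from rfl]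
    exact h2
  -- the final expansion into the basis of symmetries
  have hsum : ∀ p : Fin (n + 2) → ℂ, tmul g (der p + std 0)
      = ∑ k : Fin (n + 1), g k.succ • Ysym ((k : ℕ) + 1) p := by
    intro p
    conv_lhs => rw [expand g]
    rw [tmul_sum_left]
    have hterm : ∀ i : Fin (n + 2), tmul (g i • std (i : ℕ)) (der p + std 0)
        = g i • tmul (std (i : ℕ)) (der p + std 0) := fun i => tmul_smul_left _ _ _
    simp only [hterm]
    rw [Fin.sum_univ_succ]
    rw [hg0, zero_smul, zero_add]
    apply Finset.sum_congr rfl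
    intro k _
    rw [Ysym_eq hm, Fin.val_succ]
  have hYzero : ∀ k : Fin (n + 1), Ysym ((k : ℕ) + 1) (0 : Fin (n + 2) → ℂ)
      = std ((k : ℕ) + 1) := by
    intro k
    rw [Ysym_eq hm, der_zero, zero_add, tmul_one' _ hm0]
  refine ⟨fun k => g k.succ, ?_, ?_⟩
  · intro p hp
    show X p = ∑ k : Fin (n + 1), g k.succ • Ysym ((k : ℕ) + 1) p
    rw [hglob p hp, hsum p]
  · intro c' hc'
    funext k
    show c' k = g k.succ
    have h0 : X 0 = ∑ j : Fin (n + 1), c' j • Ysym ((j : ℕ) + 1) (0 : Fin (n + 2) → ℂ) :=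
      hc' 0 hU0
    have h2 : g = ∑ j : Fin (n + 1), c' j • (std ((j : ℕ) + 1) : Fin (n + 2) → ℂ) := by
      rw [hgdef, h0]
      apply Finset.sum_congr rfl
      intro j _
      rw [hYzero j]
    have hk : (⟨(k : ℕ), by omega⟩ : Fin (n + 1)) = k := Fin.ext rfl
    have h3 := congrFun h2 k.succ
    rw [Finset.sum_apply] at h3
    rw [Finset.sum_eq_single (⟨(k : ℕ), by omega⟩ : Fin (n + 1))] at h3
    · rw [hk] at h3
      simp only [Pi.smul_apply, std, Fin.val_succ, smul_eq_mul, if_true, mul_one] at h3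
      exact h3.symm
    · intro j _ hj
      simp only [Pi.smul_apply, std, Fin.val_succ, smul_eq_mul]
      rw [if_neg, mul_zero]
      intro hcontra
      apply hj
      apply Fin.ext
      simp only [Fin.val_mk]
      omega
    · intro hcontra
      simp at hcontra
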